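/- arXiv:math/0506578 — 2 statements merged into one kernel-verified Lean document; each statement's English description precedes it below -/
import Mathlib

section
/- Fix n > 1 and let α = (α₁, …, α_n) ∈ Fⁿ be a nonzero vector. Then Ψ(α)ⁿ ∩ ker(Φ_n) is trivial: if (x₁, …, x_n) ∈ ker(Φ_n) and every component x_i lies in Ψ(α), then x₁ = ⋯ = x_n = 0. -/
open Submodule

/-- Index type for the distinguished basis of `V(n)`: pairs `(j,i)` with `i < j`. -/
abbrev VIdx (n : ℕ) := {q : Fin n × Fin n // q.2 < q.1}

/-- Index type for the distinguished basis of `W(n)`: triples `(j,i,k)` with `i < j`, `i ≤ k`. -/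
abbrev WIdx (n : ℕ) := {t : Fin n × Fin n × Fin n // t.2.1 < t.1 ∧ t.2.1 ≤ t.2.2}

/-- The vector space `V(n)` over `F`. -/
abbrev V (F : Type*) [Field F] (n : ℕ) := VIdx n → F

/-- The vector space `W(n)` over `F`. -/
abbrev W (F : Type*) [Field F] (n : ℕ) := WIdx n → F

variable (F : Type*) [Field F] (n : ℕ)

/-- The vector `v[j,i]`, with the conventions `v[i,j] = -v[j,i]` and `v[i,i] = 0`. -/
noncomputable def v (j i : Fin n) : V F n :=
  if h : i < j then Pi.single (⟨(j, i), h⟩ : VIdx n) 1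
  else if h' : j < i then -Pi.single (⟨(i, j), h'⟩ : VIdx n) 1
  else 0

/-- The vector `w[j,i,k]` (the basis vector when `i < j` and `i ≤ k`, zero otherwise). -/
noncomputable def w (j i k : Fin n) : W F n :=
  if h : i < j ∧ i ≤ k then Pi.single (⟨(j, i, k), h⟩ : WIdx n) 1 else 0

/-- The linear map `φ_k : V(n) → W(n)` determined on basis vectors by
`φ_k(v[j,i]) = w[j,i,k]` if `i ≤ k`, and `φ_k(v[j,i]) = w[j,k,i] - w[i,k,j]` if `k < i`. -/
noncomputable def phi (k : Fin n) : V F n →ₗ[F] W F n :=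
  (Pi.basisFun F (VIdx n)).constr F fun q =>
    if q.1.2 ≤ k then w F n q.1.1 q.1.2 k
    else w F n q.1.1 k q.1.2 - w F n q.1.2 k q.1.1

/-- The linear map `Φ_n : V(n)ⁿ → W(n)`, `Φ_n(x₁,…,x_n) = φ₁(x₁) + ⋯ + φ_n(x_n)`. -/
noncomputable def Phi : (Fin n → V F n) →ₗ[F] W F n :=
  ∑ k : Fin n, (phi F n k).comp (LinearMap.proj k)

/-- For `X ≤ V(n)`, the subspace `X* ≤ W(n)`: the span of `φ₁(X) ∪ ⋯ ∪ φ_n(X)`. -/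
noncomputable def starV (X : Submodule F (V F n)) : Submodule F (W F n) :=
  ⨆ k : Fin n, X.map (phi F n k)

/-- For `Y ≤ W(n)`, the subspace `Y* ≤ V(n)`: the intersection `⋂ₖ φ_k⁻¹(Y)`. -/
noncomputable def starW (Y : Submodule F (W F n)) : Submodule F (V F n) :=
  ⨅ k : Fin n, Y.comap (phi F n k)

/-- For `α = (α₁,…,α_n) ∈ Fⁿ`, `Ψ(α)` is the subspace of `V(n)` spanned by the `n` vectors
`y_i = Σ_j α_j · v[j,i]`, `i = 1,…,n`. -/
noncomputable def Psi (α : Fin n → F) : Submodule F (V F n) :=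
  Submodule.span F (Set.range fun i : Fin n => ∑ j : Fin n, α j • v F n j i)

lemma w_apply (a b c : Fin n) (t : WIdx n) :
    w F n a b c t = if t.1 = (a, b, c) then 1 else 0 := by
  unfold w
  by_cases h2 : t.1 = (a, b, c)
  · have h : b < a ∧ b ≤ c := by have ht := t.2; rw [h2] at ht; exact ht
    rw [dif_pos h, if_pos h2, Pi.single_apply, if_pos (Subtype.ext h2)]
  · rw [if_neg h2]
    split_ifs with h
    · rw [Pi.single_apply, if_neg fun ht => h2 (congrArg Subtype.val ht)]
    · rfl

lemma v_apply (a b : Fin n) (q : VIdx n) :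
    v F n a b q = if q.1 = (a, b) then 1 else if q.1 = (b, a) then -1 else 0 := by
  unfold v
  rcases lt_trichotomy a b with h | h | h
  · rw [dif_neg (asymm h), dif_pos h, Pi.neg_apply, Pi.single_apply]
    by_cases h1 : q.1 = (a, b)
    · have hq := q.2; rw [h1] at hq; exact absurd hq (asymm h)
    · rw [if_neg h1]
      by_cases h2 : q.1 = (b, a)
      · rw [if_pos (Subtype.ext h2), if_pos h2]
      · rw [if_neg fun ht => h2 (congrArg Subtype.val ht), if_neg h2, neg_zero]
  · subst h
    rw [dif_neg (lt_irrefl a), dif_neg (lt_irrefl a)]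
    have h1 : q.1 ≠ (a, a) := fun h1 => by have hq := q.2; rw [h1] at hq; exact absurd hq (lt_irrefl a)
    rw [if_neg h1, if_neg h1]
    rfl
  · rw [dif_pos h, Pi.single_apply]
    by_cases h1 : q.1 = (a, b)
    · rw [if_pos (Subtype.ext h1), if_pos h1]
    · rw [if_neg fun ht => h1 (congrArg Subtype.val ht), if_neg h1]
      by_cases h2 : q.1 = (b, a)
      · have hq := q.2; rw [h2] at hq; exact absurd hq (asymm h)
      · rw [if_neg h2]

lemma phi_apply (k : Fin n) (u : V F n) (t : WIdx n) :
    phi F n k u t = ∑ q : VIdx n, u q *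
      (if q.1.2 ≤ k then (if t.1 = (q.1.1, q.1.2, k) then 1 else 0)
       else (if t.1 = (q.1.1, k, q.1.2) then 1 else 0)
            - (if t.1 = (q.1.2, k, q.1.1) then 1 else 0)) := by
  unfold phi
  rw [Module.Basis.constr_apply_fintype, Finset.sum_apply]
  refine Finset.sum_congr rfl fun q _ => ?_
  rw [Pi.basisFun_equivFun]
  simp only [LinearEquiv.refl_apply, Pi.smul_apply, smul_eq_mul]
  congr 1
  by_cases h : (q.1).2 ≤ k
  · rw [if_pos h, if_pos h, w_apply]
  · rw [if_neg h, if_neg h, Pi.sub_apply, w_apply, w_apply]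

lemma Phi_apply (x : Fin n → V F n) (t : WIdx n) :
    Phi F n x t = ∑ k : Fin n, phi F n k (x k) t := by
  unfold Phi
  rw [LinearMap.sum_apply, Finset.sum_apply]
  rfl

lemma collapseQ (f : VIdx n → F) (a b : Fin n) :
    (∑ q : VIdx n, if q.1 = (a, b) then f q else 0)
      = if h : b < a then f ⟨(a, b), h⟩ else 0 := by
  split_ifs with h
  · have hq : ∀ q : VIdx n, (if q.1 = (a, b) then f q else 0)
        = (if q = ⟨(a, b), h⟩ then f q else 0) := by
      intro q
      congr 1
      simp [Subtype.ext_iff]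
    rw [Finset.sum_congr rfl fun q _ => hq q, Finset.sum_ite_eq']
    simp
  · refine Finset.sum_eq_zero fun q _ => ?_
    rw [if_neg]
    intro hq
    have hq2 := q.2
    rw [hq] at hq2
    exact h hq2

/-- For nonzero `α ∈ Fⁿ`, `Ψ(α)ⁿ ∩ ker(Φ_n)` is trivial: if `(x₁,…,x_n) ∈ ker(Φ_n)` and
every `x_i ∈ Ψ(α)`, then all `x_i = 0`. -/
theorem statement17 (p : ℕ) [Fact p.Prime] (hp2 : p ≠ 2) (n : ℕ) (hn : 1 < n)
    (α : Fin n → ZMod p) (hα : α ≠ 0)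
    (x : Fin n → V (ZMod p) n) (hx : Phi (ZMod p) n x = 0)
    (hxP : ∀ i : Fin n, x i ∈ Psi (ZMod p) n α) :
    x = 0 := by
  classical
  choose c hc using fun k => (mem_span_range_iff_exists_fun (ZMod p)).mp (hxP k)
  set Xc : Fin n → Fin n → Fin n → ZMod p :=
    fun k j i => c k i * α j - c k j * α i with hXc
  have xval : ∀ (k : Fin n) (q : VIdx n), x k q = Xc k q.1.1 q.1.2 := by
    intro k q
    rw [← hc k, Finset.sum_apply]
    have hterm : ∀ m : Fin n, (c k m • ∑ j : Fin n, α j • v (ZMod p) n j m) q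
        = (if m = q.1.2 then c k m * α q.1.1 else 0)
          - (if m = q.1.1 then c k m * α q.1.2 else 0) := by
      intro m
      rw [Pi.smul_apply, Finset.sum_apply, smul_eq_mul, Finset.mul_sum]
      have h2 : ∀ j : Fin n, c k m * (α j • v (ZMod p) n j m) q
          = (if m = q.1.2 ∧ j = q.1.1 then c k m * α j else 0)
            - (if m = q.1.1 ∧ j = q.1.2 then c k m * α j else 0) := by
        intro j
        rw [Pi.smul_apply, smul_eq_mul, v_apply]
        obtain ⟨⟨a, b⟩, hba⟩ := q
        replace hba : b < a := hba
        simp only [Prod.mk.injEq]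
        split_ifs
        all_goals try ring
        all_goals exfalso
        all_goals simp only [Fin.ext_iff, Fin.lt_def, Fin.le_def, not_and, not_le, not_lt] at *
        all_goals omega
      rw [Finset.sum_congr rfl fun j _ => h2 j, Finset.sum_sub_distrib]
      simp only [ite_and, Finset.sum_ite_irrel, Finset.sum_const_zero,
        Finset.sum_ite_eq', Finset.mem_univ, if_true]
    rw [Finset.sum_congr rfl fun m _ => hterm m, Finset.sum_sub_distrib]
    simp only [Finset.sum_ite_eq', Finset.mem_univ, if_true, hXc]
  have keyE : ∀ J I K : Fin n, I < J → I ≤ K →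
      Xc K J I + (if I < K then Xc I J K else 0) = 0 := by
    intro J I K hIJ hIK
    have h0 := congrFun hx ⟨(J, I, K), hIJ, hIK⟩
    rw [Phi_apply] at h0
    simp only [Pi.zero_apply] at h0
    have hrw : ∀ k : Fin n, phi (ZMod p) n k (x k) ⟨(J, I, K), ⟨hIJ, hIK⟩⟩ =
        ∑ q : VIdx n, ((if k = K ∧ q.1 = (J, I) then x k q else 0)
          + (if k = I ∧ I < K ∧ q.1 = (J, K) then x k q else 0)
          - (if k = I ∧ q.1 = (K, J) then x k q else 0)) := by
      intro k
      rw [phi_apply]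
      refine Finset.sum_congr rfl fun q _ => ?_
      obtain ⟨⟨a, b⟩, hba⟩ := q
      replace hba : b < a := hba
      simp only [Prod.mk.injEq]
      split_ifs
      all_goals try ring
      all_goals exfalso
      all_goals simp only [Fin.ext_iff, Fin.lt_def, Fin.le_def, not_and, not_le, not_lt] at *
      all_goals omega
    rw [Finset.sum_congr rfl fun k _ => hrw k] at h0
    simp only [Finset.sum_add_distrib, Finset.sum_sub_distrib, ite_and,
      Finset.sum_ite_irrel, Finset.sum_const_zero, collapseQ,
      Finset.sum_ite_eq', Finset.mem_univ, if_true] at h0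
    rw [dif_pos hIJ] at h0
    simp only [xval] at h0
    by_cases hIK' : I < K
    · rw [if_pos hIK'] at h0 ⊢
      rcases lt_trichotomy K J with hKJ | hKJ | hKJ
      · rw [dif_pos hKJ, dif_neg (asymm hKJ)] at h0
        simp only [hXc] at h0 ⊢
        linear_combination h0
      · subst hKJ
        try rw [dif_neg (lt_irrefl _), dif_neg (lt_irrefl _)] at h0
        simp only [hXc] at h0 ⊢
        linear_combination h0
      · rw [dif_neg (asymm hKJ), dif_pos hKJ] at h0
        simp only [hXc] at h0 ⊢
        linear_combination h0
    · rw [if_neg hIK'] at h0 ⊢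
      have hKI : K = I := le_antisymm (not_lt.mp hIK') hIK
      subst hKI
      try rw [dif_neg (asymm hIJ)] at h0
      simp only [hXc] at h0 ⊢
      linear_combination h0
  -- algebra phase
  have XJJ : ∀ I J : Fin n, Xc I J J = 0 := by
    intro I J; simp only [hXc]; ring
  have E1 : ∀ I J : Fin n, I < J → Xc I J I = 0 := by
    intro I J h
    have h' := keyE J I I h le_rfl
    rwa [if_neg (lt_irrefl I), add_zero] at h'
  have E2 : ∀ I J K : Fin n, I < J → I < K → Xc K J I + Xc I J K = 0 := by
    intro I J K h h'
    have h'' := keyE J I K h h'.le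
    rwa [if_pos h'] at h''
  have E3 : ∀ I J : Fin n, I < J → Xc J J I = 0 := by
    intro I J h
    have h' := E2 I J J h h
    rwa [XJJ, add_zero] at h'
  have minL : ∀ m a b : Fin n, m < a → m < b → Xc m a b = 0 := by
    intro m a b hma hmb
    by_cases hm : α m = 0
    · have e1 := E2 m a b hma hmb
      have e4 := E2 m b a hmb hma
      have e2 := E3 m a hma
      have e3 := E3 m b hmb
      simp only [hXc] at e1 e2 e3 e4 ⊢
      by_cases ha : α a = 0
      · linear_combination e1 + c b a * hm - c b m * ha
      · have h5 : c a m = 0 := by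
          have h6 : c a m * α a = 0 := by linear_combination e2 + c a a * hm
          exact (mul_eq_zero.mp h6).resolve_right ha
        linear_combination -e4 + α b * h5 - c a b * hm
    · have e2 := E1 m a hma
      have e3 := E1 m b hmb
      simp only [hXc] at e2 e3 ⊢
      have h5 : α m * (c m b * α a - c m a * α b) = 0 := by
        linear_combination α b * e2 - α a * e3
      have h6 := (mul_eq_zero.mp h5).resolve_left hm
      linear_combination h6
  have main : ∀ k a b : Fin n, b < a → Xc k a b = 0 := by
    intro k a b hba
    rcases lt_trichotomy k b with h | h | h
    · exact minL k a b (h.trans hba) h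
    · subst h; exact E1 k a hba
    · have h' := E2 b a k hba h
      rwa [minL b a k hba h, add_zero] at h'
  funext k q
  show x k q = 0
  rw [xval]
  exact main k q.1.1 q.1.2 q.2
end

section
/- Fix n > 1, let α ∈ Fⁿ be a nonzero vector, let x ∈ V(n), and let X be the subspace of V(n) spanned by Ψ(α) together with x. Then Xⁿ ∩ ker(Φ_n) is nontrivial (i.e., there is a nonzero element of ker(Φ_n) all of whose components lie in X) if and only if x ∉ Ψ(α). -/
open Submodule

variable (F : Type*) [Field F] (n : ℕ)

section Aux
variable {F : Type*} [Field F] {n : ℕ}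

def Am (x : V F n) (j i : Fin n) : F :=
  if h : i < j then x ⟨(j,i),h⟩ else if h' : j < i then -x ⟨(i,j),h'⟩ else 0

lemma Am_self (x : V F n) (i : Fin n) : Am x i i = 0 := by simp [Am]

lemma Am_apply (x : V F n) {j i : Fin n} (h : i < j) : Am x j i = x ⟨(j,i),h⟩ := by
  simp [Am, h]

lemma Am_antisymm (x : V F n) (j i : Fin n) : Am x i j = - Am x j i := by
  rcases lt_trichotomy i j with h|rfl|h
  · simp [Am, h, asymm h, h.ne, h.ne']
  · simp [Am]
  · simp [Am, h, asymm h, h.ne, h.ne']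

lemma Am_zero (j i : Fin n) : Am (0 : V F n) j i = 0 := by
  unfold Am; split_ifs <;> simp

lemma Am_ext {x y : V F n} (h : ∀ j i, Am x j i = Am y j i) : x = y := by
  funext q
  obtain ⟨⟨j,i⟩,hq⟩ := q
  have := h j i
  rwa [Am_apply x hq, Am_apply y hq] at this

/-- `Am · j i` as a linear map. -/
def AmL (j i : Fin n) : V F n →ₗ[F] F where
  toFun x := Am x j i
  map_add' a b := by
    simp only [Am]; split_ifs <;> simp [Pi.add_apply] <;> ring
  map_smul' c a := by
    simp only [Am]; split_ifs <;> simp [Pi.smul_apply] <;> ring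

lemma AmL_apply (x : V F n) (j i : Fin n) : AmL j i x = Am x j i := rfl


lemma w_apply_s18 (j i k J I K : Fin n) (hJ : I < J) (hK : I ≤ K) :
    w F n j i k ⟨(J,I,K),hJ,hK⟩ = if j = J ∧ i = I ∧ k = K then 1 else 0 := by
  unfold w
  split_ifs with h h2 h2
  · rw [Pi.single_apply, if_pos]
    simp [Subtype.ext_iff, Prod.ext_iff, h2.1, h2.2.1, h2.2.2]
  · rw [Pi.single_apply, if_neg]
    simp only [Subtype.mk.injEq, Prod.mk.injEq]
    rintro ⟨rfl, rfl, rfl⟩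
    exact h2 ⟨rfl, rfl, rfl⟩
  · obtain ⟨rfl, rfl, rfl⟩ := h2
    exact (h ⟨hJ, hK⟩).elim
  · rfl


lemma summand (k : Fin n) (x : V F n) (J I K j i : Fin n) (hJ : I < J) (hK : I ≤ K)
    (hij : i < j) :
    x ⟨(j,i),hij⟩ * ((if i ≤ k then w F n j i k
        else w F n j k i - w F n i k j) ⟨(J,I,K),hJ,hK⟩) =
      (if k = K ∧ j = J ∧ i = I then x ⟨(j,i),hij⟩ else 0)
    + (if k = I ∧ I < K ∧ j = J ∧ i = K then x ⟨(j,i),hij⟩ else 0)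
    - (if k = I ∧ j = K ∧ i = J then x ⟨(j,i),hij⟩ else 0) := by
  by_cases hik : i ≤ k
  · rw [if_pos hik, w_apply_s18 _ _ _ _ _ _ hJ hK]
    split_ifs <;> (try ring) <;> exfalso <;> (simp only [Fin.ext_iff, Fin.lt_def, Fin.le_def] at *) <;> omega
  · rw [if_neg hik, Pi.sub_apply, w_apply_s18 _ _ _ _ _ _ hJ hK, w_apply_s18 _ _ _ _ _ _ hJ hK]
    split_ifs <;> (try ring) <;> exfalso <;> (simp only [Fin.ext_iff, Fin.lt_def, Fin.le_def] at *) <;> omega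


lemma phi_apply_s18 (k : Fin n) (x : V F n) (J I K : Fin n) (hJ : I < J) (hK : I ≤ K) :
    phi F n k x ⟨(J,I,K),hJ,hK⟩ =
      (if k = K then Am x J I else 0) + (if k = I ∧ I < K then Am x J K else 0) := by
  have hrep : phi F n k x ⟨(J,I,K),hJ,hK⟩ = ∑ q : VIdx n,
      x q * ((if q.1.2 ≤ k then w F n q.1.1 q.1.2 k
        else w F n q.1.1 k q.1.2 - w F n q.1.2 k q.1.1) ⟨(J,I,K),hJ,hK⟩) := by
    rw [phi, Module.Basis.constr_apply_fintype, Pi.basisFun_equivFun]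
    rw [Finset.sum_apply]
    simp [Pi.smul_apply, smul_eq_mul]
  rw [hrep]
  have hsummand : ∀ q : VIdx n,
      x q * ((if q.1.2 ≤ k then w F n q.1.1 q.1.2 k
        else w F n q.1.1 k q.1.2 - w F n q.1.2 k q.1.1) ⟨(J,I,K),hJ,hK⟩) =
      (if k = K ∧ q.1.1 = J ∧ q.1.2 = I then x q else 0)
    + (if k = I ∧ I < K ∧ q.1.1 = J ∧ q.1.2 = K then x q else 0)
    - (if k = I ∧ q.1.1 = K ∧ q.1.2 = J then x q else 0) := by
    rintro ⟨⟨j,i⟩,hij⟩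
    exact summand k x J I K j i hJ hK hij
  simp only [hsummand]
  rw [Finset.sum_sub_distrib, Finset.sum_add_distrib]
  have e1 : (∑ q : VIdx n, if k = K ∧ q.1.1 = J ∧ q.1.2 = I then x q else 0)
      = if k = K then Am x J I else 0 := by
    by_cases hk : k = K
    · rw [if_pos hk, Finset.sum_eq_single (⟨(J,I),hJ⟩ : VIdx n)]
      · simp [hk, Am_apply x hJ]
      · rintro ⟨⟨j,i⟩,hij⟩ - hne
        rw [if_neg]
        rintro ⟨-, rfl, rfl⟩
        exact hne rfl
      · simp
    · rw [if_neg hk, Finset.sum_eq_zero]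
      rintro q -
      rw [if_neg]
      rintro ⟨h1, -⟩
      exact hk h1
  have e2 : (∑ q : VIdx n, if k = I ∧ I < K ∧ q.1.1 = J ∧ q.1.2 = K then x q else 0)
      = if k = I ∧ I < K ∧ K < J then Am x J K else 0 := by
    by_cases hKJ : K < J
    · rw [Finset.sum_eq_single (⟨(J,K),hKJ⟩ : VIdx n)]
      · rw [Am_apply x hKJ]
        simp [hKJ, and_assoc]
      · rintro ⟨⟨j,i⟩,hij⟩ - hne
        rw [if_neg]
        rintro ⟨-, -, rfl, rfl⟩
        exact hne rfl
      · simp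
    · rw [if_neg (by tauto), Finset.sum_eq_zero]
      rintro ⟨⟨j,i⟩,hij⟩ -
      rw [if_neg]
      rintro ⟨-, -, rfl, rfl⟩
      exact hKJ hij
  have e3 : (∑ q : VIdx n, if k = I ∧ q.1.1 = K ∧ q.1.2 = J then x q else 0)
      = if k = I ∧ J < K then - Am x J K else 0 := by
    by_cases hJK : J < K
    · rw [Finset.sum_eq_single (⟨(K,J),hJK⟩ : VIdx n)]
      · rw [Am_antisymm, Am_apply x hJK]
        simp [hJK]
      · rintro ⟨⟨j,i⟩,hij⟩ - hne
        rw [if_neg]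
        rintro ⟨-, rfl, rfl⟩
        exact hne rfl
      · simp
    · rw [if_neg (by tauto), Finset.sum_eq_zero]
      rintro ⟨⟨j,i⟩,hij⟩ -
      rw [if_neg]
      rintro ⟨-, rfl, rfl⟩
      exact hJK hij
  rw [e1, e2, e3]
  rcases lt_trichotomy K J with h | h | h
  · split_ifs <;> (try ring) <;> exfalso <;>
      (simp only [Fin.ext_iff, Fin.lt_def, Fin.le_def] at *) <;> omega
  · subst h
    rw [Am_self]
    split_ifs <;> (try ring) <;> exfalso <;>
      (simp only [Fin.ext_iff, Fin.lt_def, Fin.le_def] at *) <;> omega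
  · split_ifs <;> (try ring) <;> exfalso <;>
      (simp only [Fin.ext_iff, Fin.lt_def, Fin.le_def] at *) <;> omega


lemma Phi_apply_s18 (z : Fin n → V F n) (J I K : Fin n) (hJ : I < J) (hK : I ≤ K) :
    Phi F n z ⟨(J,I,K),hJ,hK⟩ =
      Am (z K) J I + (if I < K then Am (z I) J K else 0) := by
  have : Phi F n z ⟨(J,I,K),hJ,hK⟩ = ∑ k : Fin n, phi F n k (z k) ⟨(J,I,K),hJ,hK⟩ := by
    rw [Phi, LinearMap.sum_apply, Finset.sum_apply]
    rfl
  rw [this]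
  simp only [phi_apply_s18 _ _ _ _ _ hJ hK]
  rw [Finset.sum_add_distrib]
  congr 1
  · simp
  · have : ∀ k : Fin n, (if k = I ∧ I < K then Am (z k) J K else 0)
        = if k = I then (if I < K then Am (z k) J K else 0) else 0 := by
      intro k
      split_ifs <;> tauto
    simp only [this]
    simp

lemma ker_iff (z : Fin n → V F n) :
    Phi F n z = 0 ↔ ∀ J I K : Fin n, I < J → I ≤ K →
      Am (z K) J I + (if I < K then Am (z I) J K else 0) = 0 := by
  constructor
  · intro h J I K hJ hK
    rw [← Phi_apply_s18 z J I K hJ hK, h]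
    rfl
  · intro h
    funext t
    obtain ⟨⟨J,I,K⟩,hJ,hK⟩ := t
    rw [Phi_apply_s18 z J I K hJ hK]
    exact h J I K hJ hK


section ker
variable {z : Fin n → V F n} (hz : Phi F n z = 0)
include hz

lemma kerC1 {J I : Fin n} (hJ : I < J) : Am (z I) J I = 0 := by
  have := (ker_iff z).1 hz J I I hJ le_rfl
  simpa using this

lemma kerC2 {J I K : Fin n} (hJ : I < J) (hK : I < K) :
    Am (z K) J I + Am (z I) J K = 0 := by
  have := (ker_iff z).1 hz J I K hJ hK.le
  simpa [hK] using this

lemma kerL0a (a b : Fin n) : Am (z a) b a = 0 := by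
  rcases lt_trichotomy a b with h | rfl | h
  · exact kerC1 hz h
  · exact Am_self _ _
  · rw [Am_antisymm]
    have h2 := kerC2 hz h h
    rw [Am_self] at h2
    simp only [add_zero] at h2
    rw [h2, neg_zero]

lemma kerL0b (a b : Fin n) : Am (z a) a b = 0 := by
  rw [Am_antisymm, kerL0a hz, neg_zero]

lemma ker_swap13 (k j i : Fin n) : Am (z k) j i + Am (z i) j k = 0 := by
  rcases lt_trichotomy i k with hik | rfl | hki
  · rcases lt_trichotomy i j with hij | rfl | hji
    · exact kerC2 hz hij hik
    · rw [Am_self, kerL0b hz, add_zero]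
    · -- j < i < k : j is the minimum
      have h1 := kerC2 hz hji (hji.trans hik)
      have h2 := kerC2 hz (hji.trans hik) hji
      have e1 := Am_antisymm (z k) j i
      have e2 := Am_antisymm (z i) j k
      have e3 := Am_antisymm (z j) i k
      linear_combination -h1 - h2 + e1 + e2 + e3
  · rw [kerL0a hz i j]
    ring
  · rcases lt_trichotomy k j with hkj | rfl | hjk
    · linear_combination kerC2 hz hkj hki
    · rw [kerL0b hz, Am_self, zero_add]
    · -- j < k, j < i
      have h1 := kerC2 hz hjk (hjk.trans hki)
      have h2 := kerC2 hz (hjk.trans hki) hjk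
      have e1 := Am_antisymm (z k) j i
      have e2 := Am_antisymm (z i) j k
      have e3 := Am_antisymm (z j) i k
      linear_combination -h1 - h2 + e1 + e2 + e3

end ker


lemma Am_v (l m j i : Fin n) :
    Am (v F n l m) j i = (if l = j ∧ m = i then 1 else 0) - (if l = i ∧ m = j then 1 else 0) := by
  unfold Am v
  split_ifs <;>
    (try (simp only [Pi.neg_apply, Pi.zero_apply, Pi.single_apply, Subtype.mk.injEq,
      Prod.mk.injEq])) <;>
    (try split_ifs) <;> (try ring) <;> exfalso <;>
      (simp only [Fin.ext_iff, Fin.lt_def, Fin.le_def] at *) <;> omega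

lemma Am_sum (s : Finset (Fin n)) (g : Fin n → V F n) (j i : Fin n) :
    Am (∑ m ∈ s, g m) j i = ∑ m ∈ s, Am (g m) j i := by
  rw [← AmL_apply, map_sum]
  rfl

lemma Am_smul' (c : F) (a : V F n) (j i : Fin n) : Am (c • a) j i = c * Am a j i := by
  rw [← AmL_apply, map_smul, AmL_apply, smul_eq_mul]

lemma Am_add' (a b : V F n) (j i : Fin n) : Am (a + b) j i = Am a j i + Am b j i := by
  rw [← AmL_apply, map_add]
  rfl

lemma Am_comb (α : Fin n → F) (β : Fin n → F) (j i : Fin n) :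
    Am (∑ m : Fin n, β m • ∑ l : Fin n, α l • v F n l m) j i = α j * β i - α i * β j := by
  rw [Am_sum]
  have : ∀ m : Fin n, Am (β m • ∑ l : Fin n, α l • v F n l m) j i
      = β m * ((if m = i then α j else 0) - (if m = j then α i else 0)) := by
    intro m
    rw [Am_smul', Am_sum]
    congr 1
    have : ∀ l : Fin n, Am (α l • v F n l m) j i
        = α l * ((if l = j ∧ m = i then 1 else 0) - (if l = i ∧ m = j then 1 else 0)) := by
      intro l
      rw [Am_smul', Am_v]
    simp only [this]
    simp only [mul_sub, mul_ite, mul_one, mul_zero]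
    rw [Finset.sum_sub_distrib]
    congr 1
    · by_cases hmi : m = i
      · simp [hmi]
      · rw [Finset.sum_eq_zero, if_neg hmi]
        intro l _
        rw [if_neg]
        tauto
    · by_cases hmj : m = j
      · simp [hmj]
      · rw [Finset.sum_eq_zero, if_neg hmj]
        intro l _
        rw [if_neg]
        tauto
  simp only [this]
  simp only [mul_sub, mul_ite, mul_zero]
  rw [Finset.sum_sub_distrib]
  simp only [Finset.sum_ite_eq' Finset.univ, Finset.mem_univ, if_pos]
  ring

lemma mem_Psi_iff (α : Fin n → F) (u : V F n) :
    u ∈ Psi F n α ↔ ∃ β : Fin n → F, ∀ j i, Am u j i = α j * β i - α i * β j := by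
  rw [Psi, mem_span_range_iff_exists_fun]
  constructor
  · rintro ⟨β, rfl⟩
    exact ⟨β, Am_comb α β⟩
  · rintro ⟨β, hβ⟩
    refine ⟨β, Am_ext fun j i => ?_⟩
    rw [Am_comb α β, hβ]


lemma mem_sup_iff (α : Fin n → F) (x u : V F n) :
    u ∈ Psi F n α ⊔ Submodule.span F {x} ↔
      ∃ (β : Fin n → F) (c : F), ∀ j i,
        Am u j i = α j * β i - α i * β j + c * Am x j i := by
  constructor
  · intro h
    rw [Submodule.mem_sup] at h
    obtain ⟨a, ha, b, hb, rfl⟩ := h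
    rw [Submodule.mem_span_singleton] at hb
    obtain ⟨c, rfl⟩ := hb
    rw [mem_Psi_iff] at ha
    obtain ⟨β, hβ⟩ := ha
    refine ⟨β, c, fun j i => ?_⟩
    rw [Am_add', Am_smul', hβ j i]
  · rintro ⟨β, c, h⟩
    have ha : (∑ m : Fin n, β m • ∑ l : Fin n, α l • v F n l m) ∈ Psi F n α := by
      rw [Psi, mem_span_range_iff_exists_fun]
      exact ⟨β, rfl⟩
    have hb : c • x ∈ Submodule.span F {x} :=
      Submodule.smul_mem _ c (Submodule.mem_span_singleton_self x)
    have key : u = (∑ m : Fin n, β m • ∑ l : Fin n, α l • v F n l m) + c • x := by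
      apply Am_ext
      intro j i
      rw [h j i, Am_add', Am_smul']
      rw [Am_comb α β j i]
    rw [key]
    exact Submodule.add_mem _ (Submodule.mem_sup_left ha) (Submodule.mem_sup_right hb)


theorem main_general (α : Fin n → F) (hα : α ≠ 0) (x : V F n) :
    (∃ z : Fin n → V F n, z ≠ 0 ∧ Phi F n z = 0 ∧
      ∀ i : Fin n, z i ∈ Psi F n α ⊔ Submodule.span F {x}) ↔
    x ∉ Psi F n α := by
  obtain ⟨m, hm⟩ : ∃ m, α m ≠ 0 := by
    by_contra h
    push_neg at h
    exact hα (funext h)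
  constructor
  · rintro ⟨z, hz0, hker, hmem⟩ hx
    rw [mem_Psi_iff] at hx
    obtain ⟨βx, hβx⟩ := hx
    have hch : ∀ k, ∃ γ : Fin n → F, ∀ j i, Am (z k) j i = α j * γ i - α i * γ j := by
      intro k
      have := hmem k
      rw [mem_sup_iff] at this
      obtain ⟨β, c, h⟩ := this
      refine ⟨fun i => β i + c * βx i, fun j i => ?_⟩
      rw [h j i, hβx j i]
      ring
    choose γ hγ using hch
    -- γ m is proportional to α
    have hγm : ∀ j, α m * γ m j = α j * γ m m := by
      intro j
      have h0 : Am (z m) j m = 0 := kerL0a hker m j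
      rw [hγ m j m] at h0
      linear_combination -h0
    -- hence Am (z m) vanishes
    have hzm : ∀ j k, Am (z m) j k = 0 := by
      intro j k
      rw [hγ m j k]
      have e1 := hγm j
      have e2 := hγm k
      have : α m * (α j * γ m k - α k * γ m j) = 0 := by
        linear_combination α j * e2 - α k * e1
      rcases mul_eq_zero.1 this with h | h
      · exact absurd h hm
      · exact h
    -- hence Am (z k) · m vanishes
    have hγk : ∀ k j, α m * γ k j = α j * γ k m := by
      intro k j
      have hs := ker_swap13 hker k j m
      rw [hzm j k, add_zero] at hs
      rw [hγ k j m] at hs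
      linear_combination -hs
    have hzk : ∀ k j i, Am (z k) j i = 0 := by
      intro k j i
      rw [hγ k j i]
      have e1 := hγk k j
      have e2 := hγk k i
      have : α m * (α j * γ k i - α i * γ k j) = 0 := by
        linear_combination α j * e2 - α i * e1
      rcases mul_eq_zero.1 this with h | h
      · exact absurd h hm
      · exact h
    apply hz0
    funext k
    apply Am_ext
    intro j i
    have h00 : (0 : Fin n → V F n) k = 0 := rfl
    rw [hzk k j i, h00, Am_zero]
  · intro hx
    set A := Am x with hA
    set z : Fin n → V F n :=
      fun k => fun q => α k * A q.1.1 q.1.2 + α q.1.1 * A q.1.2 k + α q.1.2 * A k q.1.1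
      with hzdef
    have hAmz : ∀ k j i, Am (z k) j i
        = α k * A j i + α j * A i k + α i * A k j := by
      intro k j i
      rcases lt_trichotomy i j with h | rfl | h
      · rw [Am_apply _ h]
      · rw [Am_self]
        have e1 := Am_antisymm x i k
        have e2 : A i i = 0 := Am_self x i
        simp only [← hA] at *
        linear_combination -α k * e2 - α i * e1
      · rw [Am_antisymm, Am_apply _ h]
        have e1 := Am_antisymm x j i
        have e2 := Am_antisymm x k j
        have e3 := Am_antisymm x i k
        simp only [← hA] at *
        linear_combination -α k * e1 - α i * e2 - α j * e3
    refine ⟨z, ?_, ?_, ?_⟩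
    · -- z ≠ 0
      intro h0
      apply hx
      rw [mem_Psi_iff]
      refine ⟨fun i => (α m)⁻¹ * Am x m i, fun j i => ?_⟩
      have hT := hAmz m j i
      have h00 : z m = 0 := by rw [h0]; rfl
      rw [h00, Am_zero] at hT
      have e2 := Am_antisymm x m i
      simp only [← hA] at *
      field_simp
      linear_combination -hT - α j * e2
    · -- kernel
      rw [ker_iff]
      intro J I K hJ hK
      by_cases hIK : I < K
      · rw [if_pos hIK, hAmz, hAmz]
        have e1 := Am_antisymm x J I
        have e2 := Am_antisymm x I K
        have e3 := Am_antisymm x K J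
        simp only [← hA] at *
        linear_combination α K * e1 + α J * e2 + α I * e3
      · have hKI : K = I := le_antisymm (not_lt.1 hIK) hK
        subst hKI
        rw [if_neg hIK, add_zero, hAmz]
        have e1 := Am_antisymm x K J
        have e2 : A K K = 0 := Am_self x K
        simp only [← hA] at *
        linear_combination α K * e1 + α J * e2
    · -- membership
      intro k
      rw [mem_sup_iff]
      refine ⟨fun i => Am x i k, α k, fun j i => ?_⟩
      rw [hAmz k j i]
      have e := Am_antisymm x j k
      simp only [← hA] at *
      linear_combination α i * e

end Aux

/-- Let `α ∈ Fⁿ` be nonzero, `x ∈ V(n)`, and `X = ⟨Ψ(α), x⟩`.  Then `Xⁿ ∩ ker(Φ_n)` is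
nontrivial if and only if `x ∉ Ψ(α)`. -/
theorem statement18 (p : ℕ) [Fact p.Prime] (hp2 : p ≠ 2) (n : ℕ) (hn : 1 < n)
    (α : Fin n → ZMod p) (hα : α ≠ 0) (x : V (ZMod p) n) :
    (∃ z : Fin n → V (ZMod p) n, z ≠ 0 ∧ Phi (ZMod p) n z = 0 ∧
      ∀ i : Fin n, z i ∈ Psi (ZMod p) n α ⊔ Submodule.span (ZMod p) {x}) ↔
    x ∉ Psi (ZMod p) n α :=
  main_general α hα x
end
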